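/- arXiv:1305.1139 — 7 statements merged into one kernel-verified Lean document; each statement's English description precedes it below -/
import Mathlib

section
/- Let A be a finite set of positive reals and define Ω_2(A) to be the set of spectral radii of 2×2 matrices with all entries in A. Then |Ω_2(A)| ≥ |A·A|, where A·A = {a·b : a, b ∈ A}. -/
/-- Spectral radius of a complex matrix: max modulus of its eigenvalues. -/
noncomputable def specRad {n : ℕ} (M : Matrix (Fin n) (Fin n) ℂ) : ℝ :=
  sSup ((fun z : ℂ => ‖z‖) '' spectrum ℂ M)

/-- Ω₂(A): set of spectral radii of 2×2 real matrices with entries in A. -/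
noncomputable def Omega2 (A : Finset ℝ) : Set ℝ :=
  { r | ∃ M : Matrix (Fin 2) (Fin 2) ℝ,
      (∀ i j, M i j ∈ A) ∧ specRad (M.map (Complex.ofReal ·)) = r }

lemma mapM (a b c : ℝ) :
    (Matrix.of ![![a,b],![c,a]]).map (Complex.ofReal ·) =
      Matrix.of ![![(a:ℂ),b],![c,a]] := by
  ext i j
  fin_cases i <;> fin_cases j <;> simp

lemma spec_eq (a b c : ℝ) (hbc : 0 ≤ b * c) :
    spectrum ℂ ((Matrix.of ![![a,b],![c,a]]).map (Complex.ofReal ·)) =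
      {(↑(a + Real.sqrt (b*c)) : ℂ), (↑(a - Real.sqrt (b*c)) : ℂ)} := by
  rw [mapM]
  ext μ
  rw [spectrum.mem_iff, Matrix.isUnit_iff_isUnit_det, isUnit_iff_ne_zero, not_not,
    Algebra.algebraMap_eq_smul_one]
  have hdet : (μ • (1:Matrix (Fin 2) (Fin 2) ℂ) - Matrix.of ![![(a:ℂ),b],![c,a]]).det
      = (μ - (a + Real.sqrt (b*c))) * (μ - (a - Real.sqrt (b*c))) := by
    have hs : (↑(Real.sqrt (b*c)) : ℂ)^2 = (b:ℂ)*(c:ℂ) := by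
      rw [← Complex.ofReal_pow, Real.sq_sqrt hbc, Complex.ofReal_mul]
    simp only [Matrix.det_fin_two, Matrix.one_fin_two, Matrix.sub_apply,
      Matrix.smul_apply, Matrix.of_apply, Matrix.cons_val', Matrix.cons_val_zero,
      Matrix.cons_val_one, Matrix.head_cons, Matrix.head_fin_const, Matrix.empty_val',
      Matrix.cons_val_fin_one, smul_eq_mul]
    linear_combination hs
  rw [hdet, mul_eq_zero, sub_eq_zero, sub_eq_zero]
  simp [Set.mem_insert_iff]

lemma specRad_eq (a b c : ℝ) (ha : 0 < a) (hbc : 0 ≤ b * c) :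
    specRad ((Matrix.of ![![a,b],![c,a]]).map (Complex.ofReal ·))
      = a + Real.sqrt (b*c) := by
  have hs : 0 ≤ Real.sqrt (b*c) := Real.sqrt_nonneg _
  rw [specRad, spec_eq a b c hbc, Set.image_pair]
  simp only [Complex.norm_real, Real.norm_eq_abs]
  rw [csSup_pair]
  rw [abs_of_pos (by linarith), max_eq_left]
  rw [abs_le]
  constructor <;> linarith [abs_nonneg (a - Real.sqrt (b*c))]

lemma omega2_finite (A : Finset ℝ) : (Omega2 A).Finite := by
  have h : Omega2 A ⊆ (fun M : Matrix (Fin 2) (Fin 2) ℝ =>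
      specRad (M.map (Complex.ofReal ·))) ''
      (Set.univ.pi fun _ : Fin 2 => Set.univ.pi fun _ : Fin 2 => (A : Set ℝ)) := by
    rintro r ⟨M, hM, hr⟩
    exact ⟨M, fun i _ j _ => hM i j, hr⟩
  exact ((Set.Finite.pi fun _ => Set.Finite.pi fun _ => A.finite_toSet).image _).subset h

theorem stmt3 (A : Finset ℝ) (hApos : ∀ x ∈ A, 0 < x) :
    (Finset.image₂ (· * ·) A A).card ≤ (Omega2 A).ncard := by
  rcases A.eq_empty_or_nonempty with rfl | ⟨a, ha⟩
  · simp
  have hapos := hApos a ha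
  set f : ℝ → ℝ := fun p => a + Real.sqrt p with hf
  have hinj : Set.InjOn f (Finset.image₂ (· * ·) A A : Set ℝ) := by
    intro p hp q hq hpq
    simp only [Finset.coe_image₂, Set.mem_image2] at hp hq
    obtain ⟨b, hb, c, hc, rfl⟩ := hp
    obtain ⟨b', hb', c', hc', rfl⟩ := hq
    have h1 : (0:ℝ) ≤ b * c := le_of_lt (mul_pos (hApos b hb) (hApos c hc))
    have h2 : (0:ℝ) ≤ b' * c' := le_of_lt (mul_pos (hApos b' hb') (hApos c' hc'))
    have : Real.sqrt (b*c) = Real.sqrt (b'*c') := by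
      simpa [hf] using hpq
    rw [← Real.sq_sqrt h1, ← Real.sq_sqrt h2, this]
  have hsub : f '' (Finset.image₂ (· * ·) A A : Set ℝ) ⊆ Omega2 A := by
    rintro r ⟨p, hp, rfl⟩
    simp only [Finset.coe_image₂, Set.mem_image2] at hp
    obtain ⟨b, hb, c, hc, rfl⟩ := hp
    refine ⟨Matrix.of ![![a,b],![c,a]], ?_, ?_⟩
    · intro i j
      fin_cases i <;> fin_cases j <;> simpa using by assumption
    · exact specRad_eq a b c hapos (le_of_lt (mul_pos (hApos b hb) (hApos c hc)))
  calc (Finset.image₂ (· * ·) A A).card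
      = (Finset.image₂ (· * ·) A A : Set ℝ).ncard := by
        rw [Set.ncard_coe_finset]
    _ = (f '' (Finset.image₂ (· * ·) A A : Set ℝ)).ncard :=
        (Set.ncard_image_of_injOn hinj).symm
    _ ≤ (Omega2 A).ncard := Set.ncard_le_ncard hsub (omega2_finite A)
end

section
/- Let A be a finite set of natural numbers (positive integers), let c be a natural number that is not a perfect square, and suppose A ∩ c*A is nonempty, where c*A = {c·a : a ∈ A}. Then |Ω_2(A)| ≥ |A| · |A ∩ c*A|, where Ω_2(A) is the set of spectral radii of 2×2 matrices with entries in A. -/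
/-- Ω₂(A): set of spectral radii of 2×2 matrices with entries in A ⊆ ℕ. -/
noncomputable def Omega2N (A : Finset ℕ) : Set ℝ :=
  { r | ∃ M : Matrix (Fin 2) (Fin 2) ℕ,
      (∀ i j, M i j ∈ A) ∧ specRad (M.map (Nat.cast : ℕ → ℂ)) = r }

lemma specRad_special (c a b : ℕ) :
    specRad !![(a:ℂ), (b:ℂ); (c:ℂ)*(b:ℂ), (a:ℂ)] = (a:ℝ) + Real.sqrt c * b := by
  have hs : (0:ℝ) ≤ Real.sqrt c * b := by positivity
  have hcs : ((Real.sqrt c : ℝ) : ℂ) * ((Real.sqrt c : ℝ) : ℂ) = (c:ℂ) := by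
    rw [← Complex.ofReal_mul, Real.mul_self_sqrt (Nat.cast_nonneg c)]
    exact Complex.ofReal_natCast c
  have hspec : spectrum ℂ (!![(a:ℂ), (b:ℂ); (c:ℂ)*(b:ℂ), (a:ℂ)]) =
      {((a + Real.sqrt c * b : ℝ) : ℂ), ((a - Real.sqrt c * b : ℝ) : ℂ)} := by
    ext z
    rw [spectrum.mem_iff, Matrix.isUnit_iff_isUnit_det, isUnit_iff_ne_zero, not_not]
    have hdet : (algebraMap ℂ (Matrix (Fin 2) (Fin 2) ℂ) z
          - !![(a:ℂ), (b:ℂ); (c:ℂ)*(b:ℂ), (a:ℂ)]).det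
        = (z - ((a + Real.sqrt c * b : ℝ):ℂ)) * (z - ((a - Real.sqrt c * b : ℝ):ℂ)) := by
      simp [Matrix.det_fin_two, Matrix.sub_apply, Matrix.algebraMap_matrix_apply]
      push_cast
      ring_nf
      linear_combination (b:ℂ)^2 * hcs
    rw [hdet, mul_eq_zero, sub_eq_zero, sub_eq_zero]
    simp [Set.mem_insert_iff]
  rw [specRad, hspec, Set.image_pair]
  simp only [Complex.norm_real, Real.norm_eq_abs]
  have h1 : |(a:ℝ) + Real.sqrt c * b| = (a:ℝ) + Real.sqrt c * b :=
    abs_of_nonneg (by positivity)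
  have h2 : |(a:ℝ) - Real.sqrt c * b| ≤ (a:ℝ) + Real.sqrt c * b := by
    have : (0:ℝ) ≤ (a:ℝ) := Nat.cast_nonneg a
    rw [abs_le]; constructor <;> linarith
  rw [h1, csSup_pair, sup_eq_left.mpr h2]

theorem stmt6 (A : Finset ℕ) (hApos : ∀ x ∈ A, 0 < x) (c : ℕ)
    (hc : ¬ IsSquare c) (hne : (A ∩ A.image (c * ·)).Nonempty) :
    A.card * (A ∩ A.image (c * ·)).card ≤ (Omega2N A).ncard := by
  classical
  set S := A ∩ A.image (c * ·) with hS
  have hirr : Irrational (Real.sqrt c) := irrational_sqrt_natCast_iff.mpr hc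
  have hc0 : c ≠ 0 := by rintro rfl; exact hc ⟨0, rfl⟩
  have hsc : (0:ℝ) < Real.sqrt c := Real.sqrt_pos.mpr (by positivity)
  set f : ℕ × ℕ → ℝ := fun p => (p.1 : ℝ) + (p.2 : ℝ) / Real.sqrt c with hf
  -- injectivity of f
  have hinj : Function.Injective f := by
    rintro ⟨a, b⟩ ⟨a', b'⟩ h
    simp only [hf] at h
    have key : ((a:ℝ) - a') * Real.sqrt c = (b' : ℝ) - b := by
      field_simp at h
      nlinarith [h]
    by_cases ha : a = a'
    · subst ha
      have : (b:ℝ) = b' := by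
        have := key
        simp at this
        nlinarith [hsc]
      have : b = b' := Nat.cast_injective this
      simp [this]
    · exfalso
      have hne' : ((a:ℝ) - a') ≠ 0 := by
        simp only [sub_ne_zero]
        exact_mod_cast ha
      have : Real.sqrt c = ((b' : ℝ) - b) / ((a:ℝ) - a') := by
        field_simp [hne'] at key ⊢
        linarith [key]
      apply hirr
      refine ⟨(((b':ℤ) - b : ℤ) : ℚ) / (((a:ℤ) - a' : ℤ) : ℚ), ?_⟩
      rw [this]
      push_cast
      ring
  -- Omega2N A is finite
  have hfin : (Omega2N A).Finite := by
    have h1 : ({M : Matrix (Fin 2) (Fin 2) ℕ | ∀ i j, M i j ∈ A}).Finite := by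
      have : {M : Matrix (Fin 2) (Fin 2) ℕ | ∀ i j, M i j ∈ A}
          = Set.pi Set.univ (fun _ : Fin 2 => Set.pi Set.univ (fun _ : Fin 2 => (A : Set ℕ))) := by
        ext M
        constructor
        · exact fun h i _ j _ => h i j
        · exact fun h i j => h i (Set.mem_univ i) j (Set.mem_univ j)
      rw [this]
      exact Set.Finite.pi (fun _ => Set.Finite.pi (fun _ => A.finite_toSet))
    have h2 : Omega2N A ⊆ (fun M : Matrix (Fin 2) (Fin 2) ℕ =>
        specRad (M.map (Nat.cast : ℕ → ℂ))) '' {M | ∀ i j, M i j ∈ A} := by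
      rintro r ⟨M, hM, hr⟩
      exact ⟨M, hM, hr⟩
    exact Set.Finite.subset (h1.image _) h2
  -- the image finset
  set T : Finset ℝ := (A ×ˢ S).image f with hT
  have hsub : (T : Set ℝ) ⊆ Omega2N A := by
    intro r hr
    simp only [hT, Finset.coe_image, Set.mem_image, Finset.mem_coe, Finset.mem_product] at hr
    obtain ⟨⟨a, b'⟩, ⟨haA, hb'S⟩, hfr⟩ := hr
    rw [hS, Finset.mem_inter, Finset.mem_image] at hb'S
    obtain ⟨hb'A, b, hbA, hcb⟩ := hb'S
    have hcb' : c * b = b' := hcb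
    refine ⟨Matrix.of ![![a, b], ![b', a]], ?_, ?_⟩
    · intro i j
      fin_cases i <;> fin_cases j <;> simpa using by assumption
    · have hmap : (Matrix.of ![![a, b], ![b', a]]).map (Nat.cast : ℕ → ℂ)
          = !![(a:ℂ), (b:ℂ); (c:ℂ)*(b:ℂ), (a:ℂ)] := by
        ext i j
        fin_cases i <;> fin_cases j <;>
          simp [Matrix.map_apply, ← hcb'] <;> push_cast <;> ring
      rw [hmap, specRad_special c a b, ← hfr]
      show (a:ℝ) + Real.sqrt c * b = (a:ℝ) + (b':ℝ) / Real.sqrt c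
      rw [← hcb']
      push_cast
      rw [mul_comm (c:ℝ) (b:ℝ), mul_div_assoc, Real.div_sqrt]
      ring
  calc A.card * S.card = (A ×ˢ S).card := (Finset.card_product A S).symm
    _ = T.card := (Finset.card_image_of_injOn (hinj.injOn)).symm
    _ = (T : Set ℝ).ncard := (Set.ncard_coe_finset T).symm
    _ ≤ (Omega2N A).ncard := Set.ncard_le_ncard hsub hfin
end

section
/- Let A be a geometric progression of positive integers whose common ratio is a positive integer that is not a perfect square, with |A| = k ≥ 1. Then |Ω_2(A)| ≥ k(k-1), where Ω_2(A) is the set of spectral radii of 2×2 matrices with entries in A. -/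
lemma spectrum_special (x y z : ℕ) (s : ℝ) (hsq : (s:ℂ)^2 = (y:ℝ) * z) :
    spectrum ℂ ((!![x, y; z, x] : Matrix (Fin 2) (Fin 2) ℕ).map (Nat.cast : ℕ → ℂ))
      = {(((x:ℝ) + s : ℝ) : ℂ), (((x:ℝ) - s : ℝ) : ℂ)} := by
  ext μ
  rw [spectrum.mem_iff, Matrix.isUnit_iff_isUnit_det, isUnit_iff_ne_zero, not_not]
  have h1 : (algebraMap ℂ (Matrix (Fin 2) (Fin 2) ℂ) μ
      - (!![x, y; z, x] : Matrix (Fin 2) (Fin 2) ℕ).map (Nat.cast : ℕ → ℂ))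
      = !![μ - x, -y; -z, μ - x] := by
    ext i j
    fin_cases i <;> fin_cases j <;>
      simp [Matrix.algebraMap_matrix_apply, Matrix.map_apply]
  rw [h1, Matrix.det_fin_two_of]
  have key : (μ - ↑x) * (μ - ↑x) - -↑y * -↑z
      = (μ - (((x:ℝ) + s : ℝ):ℂ)) * (μ - (((x:ℝ) - s : ℝ):ℂ)) := by
    push_cast
    push_cast at hsq
    linear_combination hsq
  rw [key, mul_eq_zero, sub_eq_zero, sub_eq_zero]
  simp [Set.mem_insert_iff]

lemma specRad_special_s8 (x y z : ℕ) (s : ℝ) (hs : 0 ≤ s) (hsq : (s:ℂ)^2 = (y:ℝ) * z) :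
    specRad ((!![x, y; z, x] : Matrix (Fin 2) (Fin 2) ℕ).map (Nat.cast : ℕ → ℂ))
      = (x:ℝ) + s := by
  rw [specRad, spectrum_special x y z s hsq, Set.image_pair, Complex.norm_real, Real.norm_eq_abs,
    Complex.norm_real, Real.norm_eq_abs, csSup_pair]
  have hx : (0:ℝ) ≤ (x:ℝ) := Nat.cast_nonneg x
  have h1 : |(x:ℝ) + s| = (x:ℝ) + s := abs_of_nonneg (by linarith)
  have h2 : |(x:ℝ) - s| ≤ (x:ℝ) + s := abs_le.mpr ⟨by linarith, by linarith⟩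
  rw [h1, sup_eq_left.mpr (h1 ▸ h2)]

theorem stmt8 (a r k : ℕ) (ha : 0 < a) (hr : 0 < r) (hrsq : ¬ IsSquare r)
    (hk : 1 ≤ k) :
    k * (k - 1) ≤ (Omega2N ((Finset.range k).image (fun i => a * r ^ i))).ncard := by
  set A := (Finset.range k).image (fun i => a * r ^ i) with hA
  have hr2 : 2 ≤ r := by
    rcases Nat.lt_or_ge r 2 with h | h
    · interval_cases r
      exact absurd IsSquare.one hrsq
    · exact h
  have hirr : Irrational (Real.sqrt r) := irrational_sqrt_natCast_iff.mpr hrsq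
  have hsr : 0 < Real.sqrt r := Real.sqrt_pos.mpr (by positivity)
  set F : ℕ → ℕ → ℝ :=
    fun i j => ((a * r ^ i : ℕ) : ℝ) + ((a * r ^ j : ℕ) : ℝ) * Real.sqrt r with hF
  have hinj : ∀ i j i' j' : ℕ, F i j = F i' j' → i = i' ∧ j = j' := by
    intro i j i' j' h
    have hj : j = j' := by
      by_contra hne
      have hBne : ((a * r ^ j : ℕ) : ℝ) ≠ ((a * r ^ j' : ℕ) : ℝ) := by
        intro hEq
        exact hne (Nat.pow_right_injective hr2
          (Nat.eq_of_mul_eq_mul_left ha (Nat.cast_injective hEq)))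
      set q : ℚ := (((a * r ^ i' : ℕ) : ℚ) - ((a * r ^ i : ℕ) : ℚ)) /
          (((a * r ^ j : ℕ) : ℚ) - ((a * r ^ j' : ℕ) : ℚ)) with hq
      have hsrq : Real.sqrt r = (q : ℝ) := by
        have hden : (((a * r ^ j : ℕ) : ℝ) - ((a * r ^ j' : ℕ) : ℝ)) ≠ 0 :=
          sub_ne_zero.mpr hBne
        rw [hq]
        push_cast
        push_cast at hden
        rw [eq_div_iff hden]
        simp only [hF] at h
        push_cast at h
        linear_combination h
      exact (hsrq ▸ hirr) ⟨q, rfl⟩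
    subst hj
    have : ((a * r ^ i : ℕ) : ℝ) = ((a * r ^ i' : ℕ) : ℝ) := by
      simp only [hF] at h; linarith
    exact ⟨Nat.pow_right_injective hr2
      (Nat.eq_of_mul_eq_mul_left ha (Nat.cast_injective this)), rfl⟩
  have hmem : ∀ i j : ℕ, i < k → j < k - 1 → F i j ∈ Omega2N A := by
    intro i j hi hj
    refine ⟨!![a * r ^ i, a * r ^ j; a * r ^ (j + 1), a * r ^ i], ?_, ?_⟩
    · intro p q
      fin_cases p <;> fin_cases q <;>
        · simp only [Matrix.cons_val', Matrix.cons_val_zero, Matrix.cons_val_one,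
            Matrix.head_cons, Matrix.empty_val', Matrix.cons_val_fin_one, Matrix.head_fin_const]
          exact Finset.mem_image.mpr ⟨_, Finset.mem_range.mpr (by omega), rfl⟩
    · have hs : (0:ℝ) ≤ ((a * r ^ j : ℕ) : ℝ) * Real.sqrt r := by positivity
      have hsqR : (((a * r ^ j : ℕ) : ℝ) * Real.sqrt r) ^ 2
          = ((a * r ^ j : ℕ) : ℝ) * ((a * r ^ (j + 1) : ℕ) : ℝ) := by
        rw [mul_pow, Real.sq_sqrt (by positivity : (0:ℝ) ≤ (r:ℝ))]
        push_cast
        ring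
      have hsqC : ((((a * r ^ j : ℕ) : ℝ) * Real.sqrt r : ℝ) : ℂ) ^ 2
          = (((a * r ^ j : ℕ) : ℝ) : ℂ) * ((a * r ^ (j + 1) : ℕ) : ℂ) := by
        rw [← Complex.ofReal_pow, hsqR]
        push_cast
        ring
      rw [specRad_special_s8 (a * r ^ i) (a * r ^ j) (a * r ^ (j + 1))
        (((a * r ^ j : ℕ) : ℝ) * Real.sqrt r) hs hsqC]
  have hfin : (Omega2N A).Finite := by
    have h1 : {M : Matrix (Fin 2) (Fin 2) ℕ | ∀ i j, M i j ∈ A}.Finite := by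
      apply Set.Finite.subset
        (Set.Finite.pi (fun _ : Fin 2 => Set.Finite.pi (fun _ : Fin 2 => A.finite_toSet)))
      intro M hM
      simp only [Set.mem_pi, Set.mem_univ, forall_true_left, Finset.mem_coe]
      exact fun i j => hM i j
    have h2 : Omega2N A ⊆
        (fun M : Matrix (Fin 2) (Fin 2) ℕ => specRad (M.map (Nat.cast : ℕ → ℂ))) ''
          {M | ∀ i j, M i j ∈ A} := by
      rintro x ⟨M, hM, hx⟩
      exact ⟨M, hM, hx⟩
    exact (h1.image _).subset h2
  set T := (Finset.range k ×ˢ Finset.range (k - 1)).image (fun p : ℕ × ℕ => F p.1 p.2) with hT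
  have hcard : T.card = k * (k - 1) := by
    rw [hT, Finset.card_image_of_injOn, Finset.card_product, Finset.card_range,
      Finset.card_range]
    intro p _ q _ hpq
    obtain ⟨h1, h2⟩ := hinj _ _ _ _ hpq
    exact Prod.ext h1 h2
  have hsub : ↑T ⊆ Omega2N A := by
    intro x hx
    obtain ⟨p, hp, hpx⟩ := Finset.mem_image.mp (Finset.mem_coe.mp hx)
    obtain ⟨hp1, hp2⟩ := Finset.mem_product.mp hp
    exact hpx ▸ hmem p.1 p.2 (Finset.mem_range.mp hp1) (Finset.mem_range.mp hp2)
  calc k * (k - 1) = T.card := hcard.symm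
    _ = (↑T : Set ℝ).ncard := (Set.ncard_coe_finset T).symm
    _ ≤ (Omega2N A).ncard := Set.ncard_le_ncard hsub hfin
end

section
/- Let M be an n×n matrix with positive real entries such that the first m rows each have row sum a, and rows m+1 through n are all equal to each other with row sum b < a. Let v = (v_1, ..., v_n) be a positive eigenvector of M associated to the spectral radius ρ(M) (Perron vector). Then for all r ≤ m < s, we have v_r > v_s. -/
theorem stmt13 {n m : ℕ} (hm : 0 < m) (hmn : m < n)
    (M : Matrix (Fin n) (Fin n) ℝ) (hpos : ∀ i j, 0 < M i j)
    (a b : ℝ) (hab : b < a)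
    (hrowa : ∀ i : Fin n, (i : ℕ) < m → ∑ j, M i j = a)
    (hroweq : ∀ i i' : Fin n, m ≤ (i : ℕ) → m ≤ (i' : ℕ) → ∀ j, M i j = M i' j)
    (hrowb : ∀ i : Fin n, m ≤ (i : ℕ) → ∑ j, M i j = b)
    (v : Fin n → ℝ) (hv : ∀ i, 0 < v i)
    (heig : M.mulVec v = specRad (M.map (Complex.ofReal ·)) • v) :
    ∀ r s : Fin n, (r : ℕ) < m → m ≤ (s : ℕ) → v s < v r := by
  intro r s hr hs
  set ρ := specRad (M.map (Complex.ofReal ·)) with hρdef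
  have heig' : ∀ i, ∑ j, M i j * v j = ρ * v i := by
    intro i
    have := congrFun heig i
    simpa [Matrix.mulVec, dotProduct] using this
  have hρpos : 0 < ρ := by
    have h := heig' s
    have hsum : 0 < ∑ j, M s j * v j :=
      Finset.sum_pos (fun j _ => mul_pos (hpos s j) (hv j)) ⟨s, Finset.mem_univ s⟩
    nlinarith [hv s]
  have hrowle : ∀ i : Fin n, ∑ j, M i j ≤ a := by
    intro i
    rcases lt_or_ge (i : ℕ) m with h | h
    · exact le_of_eq (hrowa i h)
    · rw [hrowb i h]; exact le_of_lt hab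
  obtain ⟨j0, -, hj0⟩ := Finset.exists_max_image Finset.univ v ⟨s, Finset.mem_univ s⟩
  have hρa : ρ ≤ a := by
    have h1 : ρ * v j0 ≤ a * v j0 := by
      rw [← heig' j0]
      calc ∑ j, M j0 j * v j ≤ ∑ j, M j0 j * v j0 :=
            Finset.sum_le_sum fun j _ =>
              mul_le_mul_of_nonneg_left (hj0 j (Finset.mem_univ j)) (le_of_lt (hpos j0 j))
        _ = (∑ j, M j0 j) * v j0 := by rw [Finset.sum_mul]
        _ ≤ a * v j0 := mul_le_mul_of_nonneg_right (hrowle j0) (le_of_lt (hv j0))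
    exact le_of_mul_le_mul_right h1 (hv j0)
  by_contra hcon
  push_neg at hcon
  have htail : ∀ i : Fin n, m ≤ (i : ℕ) → v i = v s := by
    intro i hi
    have hsums : ∑ j, M i j * v j = ∑ j, M s j * v j :=
      Finset.sum_congr rfl fun j _ => by rw [hroweq i s hi hs j]
    have h2 : ρ * v i = ρ * v s := by rw [← heig' i, ← heig' s, hsums]
    exact mul_left_cancel₀ (ne_of_gt hρpos) h2
  obtain ⟨i0, -, hi0⟩ := Finset.exists_min_image Finset.univ v ⟨s, Finset.mem_univ s⟩
  obtain ⟨r0, hr0m, hr0min⟩ : ∃ r0 : Fin n, (r0 : ℕ) < m ∧ ∀ j, v r0 ≤ v j := by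
    rcases lt_or_ge (i0 : ℕ) m with h | h
    · exact ⟨i0, h, fun j => hi0 j (Finset.mem_univ j)⟩
    · refine ⟨r, hr, fun j => ?_⟩
      calc v r ≤ v s := hcon
        _ = v i0 := (htail i0 h).symm
        _ ≤ v j := hi0 j (Finset.mem_univ j)
  have hge : a * v r0 ≤ ρ * v r0 := by
    rw [← heig' r0]
    calc a * v r0 = (∑ j, M r0 j) * v r0 := by rw [hrowa r0 hr0m]
      _ = ∑ j, M r0 j * v r0 := by rw [Finset.sum_mul]
      _ ≤ ∑ j, M r0 j * v j := Finset.sum_le_sum fun j _ =>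
            mul_le_mul_of_nonneg_left (hr0min j) (le_of_lt (hpos r0 j))
  have hρeq : ρ = a := le_antisymm hρa (le_of_mul_le_mul_right hge (hv r0))
  have hconst : ∀ j, v j = v r0 := by
    have hsums : ∑ j, M r0 j * v j = ∑ j, M r0 j * v r0 := by
      rw [heig' r0, ← Finset.sum_mul, hrowa r0 hr0m, hρeq]
    have hsum0 : ∑ j, M r0 j * (v j - v r0) = 0 := by
      have hexp : ∑ j, M r0 j * (v j - v r0)
          = ∑ j, M r0 j * v j - ∑ j, M r0 j * v r0 := by
        rw [← Finset.sum_sub_distrib]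
        exact Finset.sum_congr rfl fun j _ => by ring
      rw [hexp, hsums, sub_self]
    intro j
    have hj := (Finset.sum_eq_zero_iff_of_nonneg
      (fun j _ => mul_nonneg (le_of_lt (hpos r0 j)) (sub_nonneg.mpr (hr0min j)))).mp
      hsum0 j (Finset.mem_univ j)
    rcases mul_eq_zero.mp hj with h | h
    · exact absurd h (ne_of_gt (hpos r0 j))
    · linarith [sub_eq_zero.mp h]
  have hfin : ρ * v r0 = b * v r0 := by
    have h1 : ρ * v r0 = ρ * v s := by rw [hconst s]
    rw [h1, ← heig' s]
    calc ∑ j, M s j * v j = ∑ j, M s j * v r0 :=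
          Finset.sum_congr rfl fun j _ => by rw [hconst j]
      _ = (∑ j, M s j) * v r0 := by rw [Finset.sum_mul]
      _ = b * v r0 := by rw [hrowb s hs]
    
  have : ρ = b := mul_right_cancel₀ (ne_of_gt (hv r0)) hfin
  linarith [hab, hρeq, this]
end

section
/- Let M be an n×n matrix with positive real entries, ρ its spectral radius, and v a positive eigenvector of M for ρ. Suppose indices r, s, t with s < t satisfy (M[r,t] - M[r,s])·(v_s - v_t) > 0. Then the matrix L obtained from M by swapping the entries in positions (r,s) and (r,t) satisfies ρ(L) > ρ(M). -/
open Filter Topology NNReal ENNReal in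
attribute [local instance] Matrix.linftyOpNormedAddCommGroup Matrix.linftyOpNormedRing
  Matrix.linftyOpNormedAlgebra in
/-- If `N` is entrywise nonnegative, `w` positive, `τ > 0` and `N w ≥ τ w` entrywise,
then `τ ≤ specRad N`. -/
lemma specRad_lower {n : ℕ} [Nonempty (Fin n)] (N : Matrix (Fin n) (Fin n) ℝ)
    (hN : ∀ i j, 0 ≤ N i j) (w : Fin n → ℝ) (hw : ∀ i, 0 < w i) (τ : ℝ) (hτ : 0 < τ)
    (hle : ∀ i, τ * w i ≤ N.mulVec w i) :
    τ ≤ specRad (N.map (Complex.ofReal ·)) := by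
  haveI : CompleteSpace (Matrix (Fin n) (Fin n) ℂ) := FiniteDimensional.complete ℂ _
  set A : Matrix (Fin n) (Fin n) ℂ := N.map (Complex.ofReal ·) with hA
  have hAmap : ∀ k : ℕ, A ^ k = (N ^ k).map (Complex.ofReal ·) := by
    intro k
    have : A = Complex.ofRealHom.mapMatrix N := rfl
    rw [this, ← map_pow]
    rfl
  -- nonnegativity of powers
  have hNpow : ∀ k : ℕ, ∀ i j, 0 ≤ (N ^ k) i j := by
    intro k
    induction k with
    | zero => intro i j; by_cases h : i = j <;> simp [pow_zero, Matrix.one_apply, h]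
    | succ k ih =>
        intro i j
        rw [pow_succ, Matrix.mul_apply]
        exact Finset.sum_nonneg fun l _ => mul_nonneg (ih i l) (hN l j)
  -- key entrywise bound on powers
  have hpow : ∀ k : ℕ, ∀ i, τ ^ k * w i ≤ (N ^ k).mulVec w i := by
    intro k
    induction k with
    | zero => intro i; simp [Matrix.mulVec_one, Matrix.one_mulVec]
    | succ k ih =>
        intro i
        have h1 : (N ^ (k + 1)).mulVec w i = N.mulVec ((N ^ k).mulVec w) i := by
          rw [pow_succ']
          rw [← Matrix.mulVec_mulVec]
        rw [h1]
        have h2 : ∀ j, N i j * (τ ^ k * w j) ≤ N i j * ((N ^ k).mulVec w j) := fun j =>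
          mul_le_mul_of_nonneg_left (ih j) (hN i j)
        calc τ ^ (k + 1) * w i = τ ^ k * (τ * w i) := by ring
          _ ≤ τ ^ k * N.mulVec w i :=
              mul_le_mul_of_nonneg_left (hle i) (pow_nonneg hτ.le k)
          _ = ∑ j, N i j * (τ ^ k * w j) := by
              simp only [Matrix.mulVec, dotProduct, Finset.mul_sum]
              exact Finset.sum_congr rfl fun j _ => by ring
          _ ≤ ∑ j, N i j * ((N ^ k).mulVec w j) := Finset.sum_le_sum fun j _ => h2 j
          _ = N.mulVec ((N ^ k).mulVec w) i := by
              simp [Matrix.mulVec, dotProduct]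
  obtain ⟨i₀⟩ := (inferInstance : Nonempty (Fin n))
  set wc : Fin n → ℂ := fun i => (w i : ℂ) with hwc
  have hCpos : 0 < ‖wc‖ := by
    have : wc ≠ 0 := by
      intro hc
      have := congrFun hc i₀
      simp only [hwc, Pi.zero_apply, Complex.ofReal_eq_zero] at this
      exact (hw i₀).ne' this
    exact norm_pos_iff.mpr this
  -- norm lower bound
  have hnorm : ∀ k : ℕ, τ ^ k * w i₀ ≤ ‖A ^ k‖ * ‖wc‖ := by
    intro k
    have h1 : ((A ^ k).mulVec wc) i₀ = (((N ^ k).mulVec w i₀ : ℝ) : ℂ) := by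
      rw [hAmap k]
      simp only [Matrix.mulVec, dotProduct, Matrix.map_apply, hwc]
      norm_cast
    have h2 : ‖((A ^ k).mulVec wc) i₀‖ ≤ ‖(A ^ k).mulVec wc‖ := norm_le_pi_norm _ i₀
    have h3 : ‖(A ^ k).mulVec wc‖ ≤ ‖A ^ k‖ * ‖wc‖ := Matrix.linfty_opNorm_mulVec _ _
    have h4 : τ ^ k * w i₀ ≤ ‖((A ^ k).mulVec wc) i₀‖ := by
      rw [h1, Complex.norm_real, Real.norm_eq_abs]
      exact (hpow k i₀).trans (le_abs_self _)
    linarith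
  -- Gelfand's formula
  have hG := spectrum.pow_nnnorm_pow_one_div_tendsto_nhds_spectralRadius A
  have key : ∀ τ' : ℝ≥0, (τ' : ℝ) < τ → (τ' : ENNReal) ≤ spectralRadius ℂ A := by
    intro τ' hτ'
    refine ge_of_tendsto hG ?_
    have hratio : Filter.Tendsto (fun k : ℕ => ((τ' : ℝ) / τ) ^ k) atTop (𝓝 0) :=
      tendsto_pow_atTop_nhds_zero_of_lt_one (div_nonneg τ'.coe_nonneg hτ.le)
        ((div_lt_one hτ).mpr hτ')
    have hev : ∀ᶠ k : ℕ in atTop, ((τ' : ℝ) / τ) ^ k < (w i₀ / ‖wc‖) := by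
      exact hratio.eventually_lt_const (div_pos (hw i₀) hCpos)
    filter_upwards [hev, Filter.eventually_ge_atTop 1] with k hk hk1
    -- show (τ' : ENNReal) ≤ (‖A^k‖₊)^(1/k)
    have hb : (τ' : ℝ) ^ k ≤ ‖A ^ k‖ := by
      have h5 : ((τ' : ℝ) / τ) ^ k * ‖wc‖ < w i₀ := by
        rw [← lt_div_iff₀ hCpos]; exact hk
      have h6 : (τ' : ℝ) ^ k * ‖wc‖ < τ ^ k * w i₀ := by
        have := mul_lt_mul_of_pos_left h5 (pow_pos hτ k)
        calc (τ' : ℝ) ^ k * ‖wc‖ = τ ^ k * (((τ' : ℝ) / τ) ^ k * ‖wc‖) := by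
              rw [div_pow]; field_simp
          _ < τ ^ k * w i₀ := this
      have := (h6.trans_le (hnorm k)).le
      have h7 : (τ' : ℝ) ^ k * ‖wc‖ ≤ ‖A ^ k‖ * ‖wc‖ := this
      exact le_of_mul_le_mul_right h7 hCpos
    have hb' : (τ' : ENNReal) ^ (k : ℕ) ≤ (‖A ^ k‖₊ : ENNReal) := by
      rw [← ENNReal.coe_pow]
      rw [ENNReal.coe_le_coe, ← NNReal.coe_le_coe]
      push_cast
      exact hb
    calc (τ' : ENNReal) = ((τ' : ENNReal) ^ (k : ℕ)) ^ (1 / (k : ℝ)) := by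
          rw [← ENNReal.rpow_natCast, ← ENNReal.rpow_mul,
            mul_one_div_cancel (by exact_mod_cast Nat.one_le_iff_ne_zero.mp hk1 :
              (k : ℝ) ≠ 0), ENNReal.rpow_one]
      _ ≤ (‖A ^ k‖₊ : ENNReal) ^ (1 / (k : ℝ)) :=
          ENNReal.rpow_le_rpow hb' (by positivity)
  -- convert to specRad
  obtain ⟨z, hz, hznorm⟩ := spectrum.exists_nnnorm_eq_spectralRadius A
  have hzabs : τ ≤ ‖z‖ := by
    by_contra hc
    push_neg at hc
    set τ' : ℝ≥0 := ⟨(‖z‖ + τ) / 2, by positivity⟩ with hτ'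
    have h1 : (τ' : ℝ) < τ := by
      show (‖z‖ + τ) / 2 < τ; linarith
    have h2 := key τ' h1
    rw [← hznorm, ENNReal.coe_le_coe, ← NNReal.coe_le_coe] at h2
    simp only [hτ', NNReal.coe_mk, coe_nnnorm] at h2
    change (‖z‖ + τ) / 2 ≤ ‖z‖ at h2
    linarith
  have hbdd : BddAbove ((fun z : ℂ => ‖z‖) '' spectrum ℂ A) :=
    ((spectrum.isCompact A).image continuous_norm).bddAbove
  exact hzabs.trans (le_csSup hbdd ⟨z, hz, rfl⟩)

theorem stmt14 {n : ℕ} (M : Matrix (Fin n) (Fin n) ℝ) (hpos : ∀ i j, 0 < M i j)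
    (v : Fin n → ℝ) (hv : ∀ i, 0 < v i)
    (heig : M.mulVec v = specRad (M.map (Complex.ofReal ·)) • v)
    (r s t : Fin n) (hst : s < t)
    (h : 0 < (M r t - M r s) * (v s - v t)) :
    specRad (M.map (Complex.ofReal ·)) <
      specRad ((Matrix.of fun i j =>
        if i = r ∧ j = s then M r t
        else if i = r ∧ j = t then M r s
        else M i j).map (Complex.ofReal ·)) := by
  haveI : Nonempty (Fin n) := ⟨r⟩
  set τ := specRad (M.map (Complex.ofReal ·)) with hτdef
  set L : Matrix (Fin n) (Fin n) ℝ := Matrix.of fun i j =>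
    if i = r ∧ j = s then M r t else if i = r ∧ j = t then M r s else M i j with hL
  have hLpos : ∀ i j, 0 < L i j := by
    intro i j
    simp only [hL, Matrix.of_apply]
    split_ifs <;> exact hpos _ _
  -- τ > 0
  have hMv : ∀ i, M.mulVec v i = τ * v i := by
    intro i; rw [heig]; simp
  have hτpos : 0 < τ := by
    have h1 : 0 < M.mulVec v r := by
      apply Finset.sum_pos (fun j _ => mul_pos (hpos r j) (hv j)) ⟨r, Finset.mem_univ r⟩
    rw [hMv r] at h1
    nlinarith [hv r]
  -- L v ≥ τ v with strict inequality at r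
  have hLvr : τ * v r < L.mulVec v r := by
    have hdiff : L.mulVec v r - M.mulVec v r = (M r t - M r s) * (v s - v t) := by
      have h1 : L.mulVec v r - M.mulVec v r = ∑ j, (L r j - M r j) * v j := by
        simp [Matrix.mulVec, dotProduct, ← Finset.sum_sub_distrib, sub_mul]
      rw [h1]
      have h2 : ∑ j, (L r j - M r j) * v j = ∑ j ∈ ({s, t} : Finset (Fin n)),
          (L r j - M r j) * v j := by
        symm
        apply Finset.sum_subset (Finset.subset_univ _)
        intro j _ hj
        simp only [Finset.mem_insert, Finset.mem_singleton, not_or] at hj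
        have : L r j = M r j := by
          simp only [hL, Matrix.of_apply]
          split_ifs with h1 h2
          · exact absurd h1.2 hj.1
          · exact absurd h2.2 hj.2
          · rfl
        rw [this]; ring
      rw [h2, Finset.sum_pair hst.ne]
      have hLs : L r s = M r t := by simp [hL]
      have hLt : L r t = M r s := by simp [hL, hst.ne']
      rw [hLs, hLt]; ring
    have := hMv r
    nlinarith [h]
  have hLv : ∀ i, τ * v i ≤ L.mulVec v i := by
    intro i
    by_cases hi : i = r
    · subst hi; exact hLvr.le
    · have : L.mulVec v i = M.mulVec v i := by
        simp only [Matrix.mulVec, dotProduct]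
        apply Finset.sum_congr rfl
        intro j _
        simp [hL, hi]
      rw [this, hMv i]
  -- w := L v is positive
  set w : Fin n → ℝ := L.mulVec v with hw
  have hwpos : ∀ i, 0 < w i :=
    fun i => Finset.sum_pos (fun j _ => mul_pos (hLpos i j) (hv j)) ⟨r, Finset.mem_univ r⟩
  -- L w > τ w entrywise strictly
  have hLw : ∀ i, τ * w i < L.mulVec w i := by
    intro i
    have h1 : L.mulVec w i = ∑ j, L i j * w j := rfl
    have h2 : τ * w i = ∑ j, L i j * (τ * v j) := by
      simp only [hw, Matrix.mulVec, dotProduct, Finset.mul_sum]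
      apply Finset.sum_congr rfl; intro j _; ring
    rw [h1, h2]
    apply Finset.sum_lt_sum
    · intro j _
      exact mul_le_mul_of_nonneg_left (hLv j) (hLpos i j).le
    · exact ⟨r, Finset.mem_univ r, mul_lt_mul_of_pos_left hLvr (hLpos i r)⟩
  -- find uniform ε
  set c : ℝ := Finset.univ.inf' Finset.univ_nonempty
    (fun i => (L.mulVec w i - τ * w i) / w i) with hc
  have hcpos : 0 < c := by
    rw [hc]
    apply (Finset.lt_inf'_iff _).mpr
    intro i _
    exact div_pos (sub_pos.mpr (hLw i)) (hwpos i)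
  have hglobal : ∀ i, (τ + c) * w i ≤ L.mulVec w i := by
    intro i
    have h1 : c ≤ (L.mulVec w i - τ * w i) / w i :=
      Finset.inf'_le _ (Finset.mem_univ i)
    have h2 : c * w i ≤ L.mulVec w i - τ * w i := by
      rw [← le_div_iff₀ (hwpos i)]; exact h1
    linarith
  have := specRad_lower L (fun i j => (hLpos i j).le) w hwpos (τ + c)
    (by linarith) hglobal
  calc τ < τ + c := by linarith
    _ ≤ _ := this
end

section
/- If M and M' are n×n matrices with positive real entries such that M' ≥ M entrywise and M' ≠ M, then the spectral radius of M' is strictly greater than the spectral radius of M. -/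
open Matrix Filter

attribute [local instance] Matrix.linftyOpNormedRing Matrix.linftyOpNormedAlgebra

section Aux

variable {n : ℕ}

private lemma sr_map_pow (A : Matrix (Fin n) (Fin n) ℝ) (k : ℕ) :
    (A.map (Complex.ofReal ·)) ^ k = (A ^ k).map (Complex.ofReal ·) := by
  have : A.map (Complex.ofReal ·) = Complex.ofRealHom.mapMatrix A := rfl
  rw [this, ← map_pow]; rfl

private lemma sr_nonneg (A : Matrix (Fin n) (Fin n) ℂ) : 0 ≤ specRad A := by
  apply Real.sSup_nonneg
  rintro x ⟨z, -, rfl⟩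
  exact norm_nonneg z

private lemma sr_norm_mono {A B : Matrix (Fin n) (Fin n) ℝ} (hA : ∀ i j, 0 ≤ A i j)
    (h : ∀ i j, A i j ≤ B i j) :
    ‖A.map (Complex.ofReal ·)‖ ≤ ‖B.map (Complex.ofReal ·)‖ := by
  rw [Matrix.linfty_opNorm_def, Matrix.linfty_opNorm_def]
  norm_cast
  apply Finset.sup_mono_fun
  intro i _
  apply Finset.sum_le_sum
  intro j _
  simp only [Matrix.map_apply]
  rw [← NNReal.coe_le_coe]
  simp only [coe_nnnorm, Complex.norm_real, Real.norm_eq_abs]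
  rw [abs_of_nonneg (hA i j), abs_of_nonneg ((hA i j).trans (h i j))]
  exact h i j

private lemma sr_norm_row_lb (A : Matrix (Fin n) (Fin n) ℝ) (c : ℝ) (hc : 0 ≤ c)
    (h : ∀ i j, c ≤ A i j) (i : Fin n) :
    (n : ℝ) * c ≤ ‖A.map (Complex.ofReal ·)‖ := by
  rw [Matrix.linfty_opNorm_def]
  have h1 : (∑ j, ‖(A.map (Complex.ofReal ·)) i j‖₊) ≤
      (Finset.univ.sup fun i => ∑ j, ‖(A.map (Complex.ofReal ·)) i j‖₊) :=
    Finset.le_sup (f := fun i => ∑ j, ‖(A.map (Complex.ofReal ·)) i j‖₊)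
      (Finset.mem_univ i)
  calc (n:ℝ) * c ≤ ∑ j : Fin n, ‖(A.map (Complex.ofReal ·)) i j‖ := by
        have hj : ∀ j : Fin n, c ≤ ‖(A.map (Complex.ofReal ·)) i j‖ := by
          intro j
          simp only [Matrix.map_apply, Complex.norm_real, Real.norm_eq_abs]
          rw [abs_of_nonneg (hc.trans (h i j))]
          exact h i j
        calc (n:ℝ) * c = ∑ _j : Fin n, c := by
              rw [Finset.sum_const, Finset.card_univ, Fintype.card_fin, nsmul_eq_mul]
          _ ≤ _ := Finset.sum_le_sum fun j _ => hj j
    _ ≤ _ := by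
        have h2 := NNReal.coe_le_coe.mpr h1
        rw [NNReal.coe_sum] at h2
        simpa using h2

private lemma sr_gelfand_upper (hn : 0 < n) (A : Matrix (Fin n) (Fin n) ℂ)
    (k : ℕ) (hk : 0 < k) : specRad A ^ k ≤ ‖A ^ k‖ := by
  haveI : Nonempty (Fin n) := ⟨⟨0, hn⟩⟩
  rcases Set.eq_empty_or_nonempty (spectrum ℂ A) with he | hne
  · rw [specRad, he, Set.image_empty, Real.sSup_empty, zero_pow hk.ne']
    exact norm_nonneg _
  · obtain ⟨z0, hz0, hmax⟩ := (spectrum.isCompact A).exists_isMaxOn hne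
      continuous_norm.continuousOn
    have hbdd : BddAbove ((fun z : ℂ => ‖z‖) '' spectrum ℂ A) :=
      ((spectrum.isCompact A).image continuous_norm).bddAbove
    have hs : specRad A = ‖z0‖ := by
      apply le_antisymm
      · apply csSup_le (hne.image _)
        rintro x ⟨z, hz, rfl⟩
        exact hmax hz
      · exact le_csSup hbdd ⟨z0, hz0, rfl⟩
    rw [hs, ← norm_pow]
    have hmem : z0 ^ k ∈ spectrum ℂ (A ^ k) :=
      spectrum.pow_image_subset A k ⟨z0, hz0, rfl⟩
    simpa using spectrum.norm_le_norm_of_mem hmem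

private lemma sr_gelfand_lower (hn : 0 < n) (A : Matrix (Fin n) (Fin n) ℂ)
    (r : ℝ) (hr : 0 ≤ r)
    (h : ∀ k : ℕ, 0 < k → r ^ (3 * k) ≤ ‖A ^ (3 * k)‖) : r ≤ specRad A := by
  haveI : Nonempty (Fin n) := ⟨⟨0, hn⟩⟩
  have T := spectrum.pow_norm_pow_one_div_tendsto_nhds_spectralRadius A
  have hmono : Tendsto (fun k : ℕ => 3 * (k + 1)) atTop atTop := by
    apply tendsto_atTop_atTop_of_monotone
    · intro a b hab; dsimp only; omega
    · intro b; exact ⟨b, by omega⟩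
  have T3 := T.comp hmono
  have key : ∀ k : ℕ, ENNReal.ofReal r ≤
      ENNReal.ofReal (‖A ^ (3 * (k + 1))‖ ^ (1 / (3 * (k + 1) : ℕ) : ℝ)) := by
    intro k
    apply ENNReal.ofReal_le_ofReal
    set m : ℕ := 3 * (k + 1) with hm
    have hm0 : (0:ℝ) < m := by positivity
    have h1 : r = (r ^ m) ^ (1 / (m:ℝ) : ℝ) := by
      rw [← Real.rpow_natCast r m, ← Real.rpow_mul hr]
      rw [mul_one_div_cancel hm0.ne', Real.rpow_one]
    rw [h1]
    apply Real.rpow_le_rpow (pow_nonneg hr m) (h (k+1) (by omega))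
    positivity
  have hle1 : ENNReal.ofReal r ≤ spectralRadius ℂ A :=
    ge_of_tendsto T3 (Filter.Eventually.of_forall fun k => key k)
  have hle2 : spectralRadius ℂ A ≤ ENNReal.ofReal (specRad A) := by
    rw [spectralRadius]
    apply iSup₂_le
    intro z hz
    rw [← ENNReal.ofReal_coe_nnreal]
    apply ENNReal.ofReal_le_ofReal
    rw [coe_nnnorm]
    apply le_csSup ((spectrum.isCompact A).image continuous_norm).bddAbove
    exact ⟨z, hz, rfl⟩
  exact (ENNReal.ofReal_le_ofReal_iff (sr_nonneg A)).mp (hle1.trans hle2)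

private lemma sr_entry_pow_nonneg {A : Matrix (Fin n) (Fin n) ℝ} (hA : ∀ i j, 0 ≤ A i j)
    (k : ℕ) (hk : 0 < k) : ∀ i j, 0 ≤ (A ^ k) i j := by
  induction k with
  | zero => omega
  | succ k ih =>
    rcases Nat.eq_zero_or_pos k with rfl | hk'
    · simpa using hA
    · intro i j
      rw [pow_succ, Matrix.mul_apply]
      exact Finset.sum_nonneg fun l _ => mul_nonneg (ih hk' i l) (hA l j)

private lemma sr_entry_pow_mono {A B : Matrix (Fin n) (Fin n) ℝ} (hA : ∀ i j, 0 ≤ A i j)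
    (hAB : ∀ i j, A i j ≤ B i j) (k : ℕ) (hk : 0 < k) :
    ∀ i j, (A ^ k) i j ≤ (B ^ k) i j := by
  induction k with
  | zero => omega
  | succ k ih =>
    rcases Nat.eq_zero_or_pos k with rfl | hk'
    · simpa using hAB
    · intro i j
      rw [pow_succ, pow_succ, Matrix.mul_apply, Matrix.mul_apply]
      refine Finset.sum_le_sum fun l _ => ?_
      have hB : ∀ i j, 0 ≤ B i j := fun i j => (hA i j).trans (hAB i j)
      exact mul_le_mul (ih hk' i l) (hAB l j) (hA l j) (sr_entry_pow_nonneg hB k hk' i l)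

private lemma sr_entry_pow_lower {A : Matrix (Fin n) (Fin n) ℝ} {c : ℝ} (hc : 0 ≤ c)
    (h : ∀ i j, c ≤ A i j) (k : ℕ) :
    ∀ i j, c * (c * n) ^ k ≤ (A ^ (k + 1)) i j := by
  induction k with
  | zero => simpa using h
  | succ k ih =>
    intro i j
    rw [pow_succ A (k + 1), Matrix.mul_apply]
    have key : ∀ l : Fin n, (c * (c * n) ^ k) * c ≤ (A ^ (k + 1)) i l * A l j :=
      fun l => mul_le_mul (ih i l) (h l j) hc
        ((mul_nonneg hc (pow_nonneg (mul_nonneg hc n.cast_nonneg) k)).trans (ih i l))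
    calc c * (c * ↑n) ^ (k + 1) = ∑ _l : Fin n, (c * (c * n) ^ k) * c := by
          rw [Finset.sum_const, Finset.card_univ, Fintype.card_fin, nsmul_eq_mul]
          ring
      _ ≤ _ := Finset.sum_le_sum fun l _ => key l

private lemma sr_cube_apply (A : Matrix (Fin n) (Fin n) ℝ) (i j : Fin n) :
    (A ^ 3) i j = ∑ l : Fin n, ∑ k : Fin n, A i k * A k l * A l j := by
  rw [pow_succ, pow_two, Matrix.mul_apply]
  congr 1
  ext l
  rw [Matrix.mul_apply, Finset.sum_mul]

private lemma sr_cube_gain {M M' : Matrix (Fin n) (Fin n) ℝ}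
    (hpos : ∀ i j, 0 < M i j) (hle : ∀ i j, M i j ≤ M' i j)
    {i0 j0 : Fin n} {δ : ℝ} (hδ : 0 < δ) (hgap : M i0 j0 + δ ≤ M' i0 j0) (i j : Fin n) :
    (M ^ 3) i j + δ * (M i i0 * M j0 j) ≤ (M' ^ 3) i j := by
  rw [sr_cube_apply, sr_cube_apply]
  set F : Fin n → Fin n → ℝ := fun l k => M i k * M k l * M l j with hF
  set F' : Fin n → Fin n → ℝ := fun l k => M' i k * M' k l * M' l j with hF'
  have hterm : ∀ l k, F l k ≤ F' l k := by
    intro l k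
    have h1 := (hpos i k).le
    have h2 := (hpos k l).le
    have h3 := (hpos l j).le
    exact mul_le_mul (mul_le_mul (hle i k) (hle k l) h2 ((h1.trans (hle i k)))) (hle l j) h3
      (mul_nonneg (h1.trans (hle i k)) (h2.trans (hle k l)))
  have hkey : F j0 i0 + δ * (M i i0 * M j0 j) ≤ F' j0 i0 := by
    simp only [hF, hF']
    have h1 := (hpos i i0).le
    have h3 := (hpos j0 j).le
    calc M i i0 * M i0 j0 * M j0 j + δ * (M i i0 * M j0 j)
        = M i i0 * (M i0 j0 + δ) * M j0 j := by ring
      _ ≤ M' i i0 * M' i0 j0 * M' j0 j := by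
          exact mul_le_mul (mul_le_mul (hle i i0) hgap (add_nonneg (hpos i0 j0).le hδ.le)
            (h1.trans (hle i i0))) (hle j0 j) h3
            (mul_nonneg (h1.trans (hle i i0)) ((hpos i0 j0).le.trans (hle i0 j0)))
  have eG : ∀ (G : Fin n → ℝ), ∑ l : Fin n, G l = G j0 + ∑ l ∈ Finset.univ.erase j0, G l :=
    fun G => (Finset.add_sum_erase _ G (Finset.mem_univ j0)).symm
  have eH : ∀ (H : Fin n → ℝ), ∑ k : Fin n, H k = H i0 + ∑ k ∈ Finset.univ.erase i0, H k :=
    fun H => (Finset.add_sum_erase _ H (Finset.mem_univ i0)).symm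
  rw [eG (fun l => ∑ k, F l k), eG (fun l => ∑ k, F' l k),
    eH (fun k => F j0 k), eH (fun k => F' j0 k)]
  have hrest1 : ∑ k ∈ Finset.univ.erase i0, F j0 k ≤ ∑ k ∈ Finset.univ.erase i0, F' j0 k :=
    Finset.sum_le_sum fun k _ => hterm j0 k
  have hrest2 : ∑ l ∈ Finset.univ.erase j0, ∑ k, F l k ≤
      ∑ l ∈ Finset.univ.erase j0, ∑ k, F' l k :=
    Finset.sum_le_sum fun l _ => Finset.sum_le_sum fun k _ => hterm l k
  linarith

end Aux

theorem stmt16 {n : ℕ} (M M' : Matrix (Fin n) (Fin n) ℝ)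
    (hpos : ∀ i j, 0 < M i j) (hpos' : ∀ i j, 0 < M' i j)
    (hle : ∀ i j, M i j ≤ M' i j) (hne : M' ≠ M) :
    specRad (M.map (Complex.ofReal ·)) < specRad (M'.map (Complex.ofReal ·)) := by
  -- n > 0
  rcases Nat.eq_zero_or_pos n with rfl | hn
  · exact absurd (Matrix.ext fun i _ => i.elim0) hne
  haveI : Nonempty (Fin n) := ⟨⟨0, hn⟩⟩
  have hn' : (0:ℝ) < n := by exact_mod_cast hn
  -- minimum entry of M
  set m : ℝ := Finset.univ.inf' Finset.univ_nonempty
    (fun p : Fin n × Fin n => M p.1 p.2) with hm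
  have hm_le : ∀ i j, m ≤ M i j := fun i j =>
    Finset.inf'_le _ (Finset.mem_univ (i, j))
  have hm_pos : 0 < m := by
    rw [hm, Finset.lt_inf'_iff]
    exact fun p _ => hpos p.1 p.2
  -- positivity of specRad M
  set s : ℝ := specRad (M.map (Complex.ofReal ·)) with hs
  have hs_nonneg : 0 ≤ s := sr_nonneg _
  have hs_pos : 0 < s := by
    have hlb : m * n ≤ s := by
      apply sr_gelfand_lower hn _ _ (by positivity)
      intro k hk
      obtain ⟨j, hj⟩ : ∃ j, 3 * k = j + 1 := ⟨3 * k - 1, by omega⟩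
      rw [sr_map_pow, hj]
      have hent := sr_entry_pow_lower hm_pos.le hm_le j
      calc (m * (n:ℝ)) ^ (j + 1) = (n:ℝ) * (m * (m * n) ^ j) := by ring
        _ ≤ _ := sr_norm_row_lb _ _ (by positivity) hent ⟨0, hn⟩
    linarith [mul_pos hm_pos hn']
  -- strict gap entry
  have hex : ∃ i j, M i j ≠ M' i j := by
    by_contra hcon
    push_neg at hcon
    exact hne (Matrix.ext fun i j => (hcon i j).symm)
  obtain ⟨i0, j0, hij⟩ := hex
  set δ : ℝ := M' i0 j0 - M i0 j0 with hδdef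
  have hδ : 0 < δ := by
    have := lt_of_le_of_ne (hle i0 j0) hij
    simp only [hδdef]; linarith
  have hgap : M i0 j0 + δ ≤ M' i0 j0 := by simp [hδdef]
  -- cube positivity and bounds
  have hcube_pos : ∀ i j, 0 < (M ^ 3) i j := by
    intro i j
    have := sr_entry_pow_lower hm_pos.le hm_le 2 i j
    have h2 : 0 < m * (m * n) ^ 2 := by positivity
    linarith
  -- choose ε
  set d : ℝ := Finset.univ.inf' Finset.univ_nonempty
    (fun p : Fin n × Fin n => δ * (M p.1 i0 * M j0 p.2)) with hd
  have hd_pos : 0 < d := by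
    rw [hd, Finset.lt_inf'_iff]
    intro p _
    exact mul_pos hδ (mul_pos (hpos p.1 i0) (hpos j0 p.2))
  have hd_le : ∀ i j, d ≤ δ * (M i i0 * M j0 j) := fun i j =>
    Finset.inf'_le _ (Finset.mem_univ (i, j))
  set T : ℝ := Finset.univ.sup' Finset.univ_nonempty
    (fun p : Fin n × Fin n => (M ^ 3) p.1 p.2) with hT
  have hT_ge : ∀ i j, (M ^ 3) i j ≤ T := fun i j =>
    Finset.le_sup' (f := fun p : Fin n × Fin n => (M ^ 3) p.1 p.2) (Finset.mem_univ (i, j))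
  have hT_pos : 0 < T :=
    (hcube_pos ⟨0, hn⟩ ⟨0, hn⟩).trans_le (hT_ge _ _)
  set ε : ℝ := d / T with hε
  have hε_pos : 0 < ε := div_pos hd_pos hT_pos
  -- key entrywise inequality for cubes
  have hkey : ∀ i j, (1 + ε) * (M ^ 3) i j ≤ (M' ^ 3) i j := by
    intro i j
    have h1 : ε * (M ^ 3) i j ≤ d := by
      rw [hε]
      calc d / T * (M ^ 3) i j ≤ d / T * T :=
            mul_le_mul_of_nonneg_left (hT_ge i j) (by positivity)
        _ = d := div_mul_cancel₀ d hT_pos.ne'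
    have h2 := sr_cube_gain hpos hle hδ hgap i j
    have h3 := hd_le i j
    nlinarith [hcube_pos i j]
  -- entrywise comparison of powers
  set C : Matrix (Fin n) (Fin n) ℝ := (1 + ε) • (M ^ 3) with hC
  have hC_entry : ∀ i j, C i j = (1 + ε) * (M ^ 3) i j := fun i j => rfl
  have hC_nonneg : ∀ i j, 0 ≤ C i j := by
    intro i j; rw [hC_entry]
    exact mul_nonneg (by positivity) (hcube_pos i j).le
  have hCM' : ∀ i j, C i j ≤ (M' ^ 3) i j := by
    intro i j; rw [hC_entry]; exact hkey i j
  -- the target value r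
  set t : ℝ := (1 + ε) ^ ((1:ℝ)/3) with ht
  have ht_one : 1 < t := by
    rw [ht]
    rw [Real.one_lt_rpow_iff_of_pos (by linarith)]
    left
    constructor
    · linarith
    · norm_num
  have ht_pos : 0 < t := lt_trans one_pos ht_one
  set r : ℝ := t * s with hr
  have hsr : s < r := by
    rw [hr]
    exact (lt_mul_iff_one_lt_left hs_pos).mpr ht_one
  -- main bound: r ≤ specRad M'
  have hmain : r ≤ specRad (M'.map (Complex.ofReal ·)) := by
    apply sr_gelfand_lower hn _ _ (by positivity)
    intro k hk
    -- r ^ (3k) = (1+ε)^k * s^(3k)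
    have hpow_t : t ^ (3 * k) = (1 + ε) ^ k := by
      rw [ht, ← Real.rpow_natCast ((1 + ε) ^ ((1:ℝ)/3)) (3 * k),
        ← Real.rpow_mul (by linarith : (0:ℝ) ≤ 1 + ε)]
      have : (1:ℝ)/3 * ((3 * k : ℕ) : ℝ) = (k : ℝ) := by push_cast; ring
      rw [this, Real.rpow_natCast]
    have hstep1 : s ^ (3 * k) ≤ ‖(M.map (Complex.ofReal ·)) ^ (3 * k)‖ :=
      sr_gelfand_upper hn _ _ (by omega)
    -- identify matrices
    have hMk : (M.map (Complex.ofReal ·)) ^ (3 * k) = ((M ^ 3) ^ k).map (Complex.ofReal ·) := by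
      rw [sr_map_pow, pow_mul]
    have hM'k : (M'.map (Complex.ofReal ·)) ^ (3 * k) = ((M' ^ 3) ^ k).map (Complex.ofReal ·) := by
      rw [sr_map_pow, pow_mul]
    -- C^k = (1+ε)^k • (M^3)^k
    have hCk : C ^ k = (1 + ε) ^ k • ((M ^ 3) ^ k) := by
      rw [hC, smul_pow]
    -- smul map
    have hsmulmap : ((1 + ε) ^ k • ((M ^ 3) ^ k)).map (Complex.ofReal ·)
        = (((1 + ε) ^ k : ℝ) : ℂ) • (((M ^ 3) ^ k).map (Complex.ofReal ·)) := by
      ext i j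
      simp [Matrix.map_apply, Matrix.smul_apply]
    have hnorm_smul : ‖(C ^ k).map (Complex.ofReal ·)‖
        = (1 + ε) ^ k * ‖((M ^ 3) ^ k).map (Complex.ofReal ·)‖ := by
      rw [hCk, hsmulmap, norm_smul]
      congr 1
      simp only [Complex.norm_real, Real.norm_eq_abs]
      rw [abs_of_nonneg (by positivity)]
    have hmono_norm : ‖(C ^ k).map (Complex.ofReal ·)‖
        ≤ ‖((M' ^ 3) ^ k).map (Complex.ofReal ·)‖ := by
      apply sr_norm_mono
      · exact sr_entry_pow_nonneg hC_nonneg k (by omega)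
      · exact sr_entry_pow_mono hC_nonneg hCM' k (by omega)
    calc r ^ (3 * k) = (1 + ε) ^ k * s ^ (3 * k) := by
          rw [hr, mul_pow, hpow_t]
      _ ≤ (1 + ε) ^ k * ‖(M.map (Complex.ofReal ·)) ^ (3 * k)‖ :=
          mul_le_mul_of_nonneg_left hstep1 (by positivity)
      _ = ‖(C ^ k).map (Complex.ofReal ·)‖ := by rw [hMk, hnorm_smul]
      _ ≤ ‖((M' ^ 3) ^ k).map (Complex.ofReal ·)‖ := hmono_norm
      _ = ‖(M'.map (Complex.ofReal ·)) ^ (3 * k)‖ := by rw [hM'k]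
  exact lt_of_lt_of_le hsr hmain
end

section
/- The spectral radius of the 2×2 matrix [[1, 2], [1, 1]] is 1 + √2, the spectral radius of [[2, 1], [1, 1]] is (3 + √5)/2, and (3 + √5)/2 > 1 + √2; yet the spectral radius of the 3×3 matrix [[1,2,1],[1,1,3],[1,1,3]] is strictly greater than the spectral radius of [[2,1,1],[1,1,3],[1,1,3]]. -/
lemma mem_spec {n : ℕ} (M : Matrix (Fin n) (Fin n) ℂ) (z : ℂ) :
    z ∈ spectrum ℂ M ↔ (z • (1 : Matrix (Fin n) (Fin n) ℂ) - M).det = 0 := by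
  rw [spectrum.mem_iff, Matrix.isUnit_iff_isUnit_det, isUnit_iff_ne_zero, not_ne_iff,
    Algebra.algebraMap_eq_smul_one]

lemma specA : spectrum ℂ ((!![1, 2; 1, 1] : Matrix (Fin 2) (Fin 2) ℝ).map (Complex.ofReal ·))
    = {((1 + Real.sqrt 2 : ℝ) : ℂ), ((1 - Real.sqrt 2 : ℝ) : ℂ)} := by
  have hs : ((Real.sqrt 2 : ℝ) : ℂ) ^ 2 = 2 := by
    rw [← Complex.ofReal_pow, Real.sq_sqrt (by norm_num)]; norm_num
  ext z
  rw [mem_spec]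
  have hdet : (z • (1 : Matrix (Fin 2) (Fin 2) ℂ) -
      (!![1, 2; 1, 1] : Matrix (Fin 2) (Fin 2) ℝ).map (Complex.ofReal ·)).det
      = (z - ((1 + Real.sqrt 2 : ℝ) : ℂ)) * (z - ((1 - Real.sqrt 2 : ℝ) : ℂ)) := by
    norm_num [Matrix.det_fin_two, Matrix.sub_apply, Matrix.smul_apply, Matrix.one_apply,
      Matrix.map_apply, Matrix.vecHead, Matrix.vecTail]
    push_cast
    linear_combination hs
  rw [hdet, mul_eq_zero, sub_eq_zero, sub_eq_zero, Set.mem_insert_iff, Set.mem_singleton_iff]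

lemma specB : spectrum ℂ ((!![2, 1; 1, 1] : Matrix (Fin 2) (Fin 2) ℝ).map (Complex.ofReal ·))
    = {(((3 + Real.sqrt 5) / 2 : ℝ) : ℂ), (((3 - Real.sqrt 5) / 2 : ℝ) : ℂ)} := by
  have hs : ((Real.sqrt 5 : ℝ) : ℂ) ^ 2 = 5 := by
    rw [← Complex.ofReal_pow, Real.sq_sqrt (by norm_num)]; norm_num
  ext z
  rw [mem_spec]
  have hdet : (z • (1 : Matrix (Fin 2) (Fin 2) ℂ) -
      (!![2, 1; 1, 1] : Matrix (Fin 2) (Fin 2) ℝ).map (Complex.ofReal ·)).det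
      = (z - (((3 + Real.sqrt 5) / 2 : ℝ) : ℂ)) * (z - (((3 - Real.sqrt 5) / 2 : ℝ) : ℂ)) := by
    norm_num [Matrix.det_fin_two, Matrix.sub_apply, Matrix.smul_apply, Matrix.one_apply,
      Matrix.map_apply, Matrix.vecHead, Matrix.vecTail]
    push_cast
    linear_combination hs / 4
  rw [hdet, mul_eq_zero, sub_eq_zero, sub_eq_zero, Set.mem_insert_iff, Set.mem_singleton_iff]

lemma specC : spectrum ℂ ((!![1, 2, 1; 1, 1, 3; 1, 1, 3] : Matrix (Fin 3) (Fin 3) ℝ).map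
      (Complex.ofReal ·))
    = {(0 : ℂ), (((5 + Real.sqrt 21) / 2 : ℝ) : ℂ), (((5 - Real.sqrt 21) / 2 : ℝ) : ℂ)} := by
  have hs : ((Real.sqrt 21 : ℝ) : ℂ) ^ 2 = 21 := by
    rw [← Complex.ofReal_pow, Real.sq_sqrt (by norm_num)]; norm_num
  ext z
  rw [mem_spec]
  have hdet : (z • (1 : Matrix (Fin 3) (Fin 3) ℂ) -
      (!![1, 2, 1; 1, 1, 3; 1, 1, 3] : Matrix (Fin 3) (Fin 3) ℝ).map (Complex.ofReal ·)).det
      = z * ((z - (((5 + Real.sqrt 21) / 2 : ℝ) : ℂ)) *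
          (z - (((5 - Real.sqrt 21) / 2 : ℝ) : ℂ))) := by
    norm_num [Matrix.det_fin_three, Matrix.sub_apply, Matrix.smul_apply, Matrix.one_apply,
      Matrix.map_apply, Matrix.vecHead, Matrix.vecTail]
    push_cast
    linear_combination (z / 4) * hs
  rw [hdet, mul_eq_zero, mul_eq_zero, sub_eq_zero, sub_eq_zero, Set.mem_insert_iff,
    Set.mem_insert_iff, Set.mem_singleton_iff]

lemma specD : spectrum ℂ ((!![2, 1, 1; 1, 1, 3; 1, 1, 3] : Matrix (Fin 3) (Fin 3) ℝ).map
      (Complex.ofReal ·))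
    = {(0 : ℂ), ((3 + Real.sqrt 3 : ℝ) : ℂ), ((3 - Real.sqrt 3 : ℝ) : ℂ)} := by
  have hs : ((Real.sqrt 3 : ℝ) : ℂ) ^ 2 = 3 := by
    rw [← Complex.ofReal_pow, Real.sq_sqrt (by norm_num)]; norm_num
  ext z
  rw [mem_spec]
  have hdet : (z • (1 : Matrix (Fin 3) (Fin 3) ℂ) -
      (!![2, 1, 1; 1, 1, 3; 1, 1, 3] : Matrix (Fin 3) (Fin 3) ℝ).map (Complex.ofReal ·)).det
      = z * ((z - ((3 + Real.sqrt 3 : ℝ) : ℂ)) * (z - ((3 - Real.sqrt 3 : ℝ) : ℂ))) := by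
    norm_num [Matrix.det_fin_three, Matrix.sub_apply, Matrix.smul_apply, Matrix.one_apply,
      Matrix.map_apply, Matrix.vecHead, Matrix.vecTail]
    push_cast
    linear_combination z * hs
  rw [hdet, mul_eq_zero, mul_eq_zero, sub_eq_zero, sub_eq_zero, Set.mem_insert_iff,
    Set.mem_insert_iff, Set.mem_singleton_iff]

theorem stmt17 :
    specRad ((!![1, 2; 1, 1] : Matrix (Fin 2) (Fin 2) ℝ).map (Complex.ofReal ·))
      = 1 + Real.sqrt 2 ∧
    specRad ((!![2, 1; 1, 1] : Matrix (Fin 2) (Fin 2) ℝ).map (Complex.ofReal ·))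
      = (3 + Real.sqrt 5) / 2 ∧
    1 + Real.sqrt 2 < (3 + Real.sqrt 5) / 2 ∧
    specRad ((!![2, 1, 1; 1, 1, 3; 1, 1, 3] : Matrix (Fin 3) (Fin 3) ℝ).map
        (Complex.ofReal ·)) <
      specRad ((!![1, 2, 1; 1, 1, 3; 1, 1, 3] : Matrix (Fin 3) (Fin 3) ℝ).map
        (Complex.ofReal ·)) := by
  have s2 := Real.sq_sqrt (by norm_num : (2:ℝ) ≥ 0)
  have s2n := Real.sqrt_nonneg 2
  have s3 := Real.sq_sqrt (by norm_num : (3:ℝ) ≥ 0)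
  have s3n := Real.sqrt_nonneg 3
  have s5 := Real.sq_sqrt (by norm_num : (5:ℝ) ≥ 0)
  have s5n := Real.sqrt_nonneg 5
  have s21 := Real.sq_sqrt (by norm_num : (21:ℝ) ≥ 0)
  have s21n := Real.sqrt_nonneg 21
  have h2b : Real.sqrt 2 ≤ 2 := by nlinarith
  have h3b : Real.sqrt 3 ≤ 2 := by nlinarith
  have h5b : Real.sqrt 5 ≤ 3 := by nlinarith
  have h5a : 2 ≤ Real.sqrt 5 := by nlinarith
  have h21a : 4 ≤ Real.sqrt 21 := by nlinarith
  have h21b : Real.sqrt 21 ≤ 5 := by nlinarith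
  have h2a : 1 ≤ Real.sqrt 2 := by nlinarith
  refine ⟨?_, ?_, ?_, ?_⟩
  · rw [specRad, specA, Set.image_pair, csSup_pair]
    rw [Complex.norm_real, Real.norm_eq_abs, Complex.norm_real, Real.norm_eq_abs, abs_of_nonneg (by linarith),
      abs_of_nonpos (by linarith)]
    exact max_eq_left (by linarith)
  · rw [specRad, specB, Set.image_pair, csSup_pair]
    rw [Complex.norm_real, Real.norm_eq_abs, Complex.norm_real, Real.norm_eq_abs, abs_of_nonneg (by linarith),
      abs_of_nonneg (by linarith)]
    exact max_eq_left (by linarith)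
  · nlinarith
  · have e1 : specRad ((!![1, 2, 1; 1, 1, 3; 1, 1, 3] : Matrix (Fin 3) (Fin 3) ℝ).map
        (Complex.ofReal ·)) = (5 + Real.sqrt 21) / 2 := by
      rw [specRad, specC, Set.image_insert_eq, Set.image_pair]
      rw [norm_zero, Complex.norm_real, Real.norm_eq_abs, Complex.norm_real, Real.norm_eq_abs, abs_of_nonneg (by linarith),
        abs_of_nonneg (by linarith)]
      rw [csSup_insert (((Set.finite_singleton _).insert _).bddAbove)
        (Set.insert_nonempty _ _), csSup_pair]
      rw [max_eq_left (show (5 - Real.sqrt 21) / 2 ≤ (5 + Real.sqrt 21) / 2 by linarith)]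
      exact max_eq_right (by linarith)
    have e2 : specRad ((!![2, 1, 1; 1, 1, 3; 1, 1, 3] : Matrix (Fin 3) (Fin 3) ℝ).map
        (Complex.ofReal ·)) = 3 + Real.sqrt 3 := by
      rw [specRad, specD, Set.image_insert_eq, Set.image_pair]
      rw [norm_zero, Complex.norm_real, Real.norm_eq_abs, Complex.norm_real, Real.norm_eq_abs, abs_of_nonneg (by linarith),
        abs_of_nonneg (by linarith)]
      rw [csSup_insert (((Set.finite_singleton _).insert _).bddAbove)
        (Set.insert_nonempty _ _), csSup_pair]
      rw [max_eq_left (show 3 - Real.sqrt 3 ≤ 3 + Real.sqrt 3 by linarith)]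
      exact max_eq_right (by linarith)
    rw [e1, e2]
    nlinarith
end
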